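/- Let Y be a lattice-ordered abelian group and write y⁺ = y ⊔ 0. Let F₁, F₂ : Y → EReal be such that F₂ is Q-dominated by F₁ (for all μ₁, μ₂ ∈ Y and every t₂₁ with 0 ≤ t₂₁ ≤ (μ₂ − μ₁)⁺ there exists t₁₂ with 0 ≤ t₁₂ ≤ (μ₁ − μ₂)⁺ such that F₁(μ₁ + t₂₁ − t₁₂) + F₂(μ₂ − t₂₁ + t₁₂) ≤ F₁(μ₁) + F₂(μ₂)). Let H : Y → EReal be totally substitutable: for all μ₁, μ₂ ∈ Y and all μ₁', μ₂' with μ₁ ⊓ μ₂ ≤ μ₁' ≤ μ₁ ⊔ μ₂, μ₁ ⊓ μ₂ ≤ μ₂' ≤ μ₁ ⊔ μ₂ and μ₁' + μ₂' = μ₁ + μ₂, one has H(μ₁') + H(μ₂') ≤ H(μ₁) + H(μ₂). Then F₂ + H is Q-dominated by F₁ + H. -/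

import Mathlib

/-- If `F₂` is Q-dominated by `F₁` and `H` is totally
substitutable, then `F₂ + H` is Q-dominated by `F₁ + H`. -/
theorem Q_dominance_add_totallySubstitutable
    {Y : Type*} [Lattice Y] [AddCommGroup Y]
    [CovariantClass Y Y (· + ·) (· ≤ ·)]
    (F₁ F₂ H : Y → EReal)
    (hQ : ∀ μ₁ μ₂ t₂₁ : Y, 0 ≤ t₂₁ → t₂₁ ≤ (μ₂ - μ₁) ⊔ 0 →
      ∃ t₁₂ : Y, 0 ≤ t₁₂ ∧ t₁₂ ≤ (μ₁ - μ₂) ⊔ 0 ∧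
        F₁ (μ₁ + t₂₁ - t₁₂) + F₂ (μ₂ - t₂₁ + t₁₂) ≤ F₁ μ₁ + F₂ μ₂)
    (hH : ∀ μ₁ μ₂ μ₁' μ₂' : Y,
      μ₁ ⊓ μ₂ ≤ μ₁' → μ₁' ≤ μ₁ ⊔ μ₂ → μ₁ ⊓ μ₂ ≤ μ₂' → μ₂' ≤ μ₁ ⊔ μ₂ →
      μ₁' + μ₂' = μ₁ + μ₂ → H μ₁' + H μ₂' ≤ H μ₁ + H μ₂) :
    ∀ μ₁ μ₂ t₂₁ : Y, 0 ≤ t₂₁ → t₂₁ ≤ (μ₂ - μ₁) ⊔ 0 →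
      ∃ t₁₂ : Y, 0 ≤ t₁₂ ∧ t₁₂ ≤ (μ₁ - μ₂) ⊔ 0 ∧
        (F₁ (μ₁ + t₂₁ - t₁₂) + H (μ₁ + t₂₁ - t₁₂)) +
          (F₂ (μ₂ - t₂₁ + t₁₂) + H (μ₂ - t₂₁ + t₁₂)) ≤
          (F₁ μ₁ + H μ₁) + (F₂ μ₂ + H μ₂) := by
  intro μ₁ μ₂ t₂₁ ht0 ht
  obtain ⟨t₁₂, hs0, hs, hF⟩ := hQ μ₁ μ₂ t₂₁ ht0 ht
  refine ⟨t₁₂, hs0, hs, ?_⟩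
  have h1l : μ₁ ⊓ μ₂ ≤ μ₁ + t₂₁ - t₁₂ := by
    have : μ₁ - ((μ₁ - μ₂) ⊔ 0) ≤ μ₁ - t₁₂ := by
      exact sub_le_sub_left hs μ₁
    have h2 : μ₁ - ((μ₁ - μ₂) ⊔ 0) = μ₁ ⊓ μ₂ := by
      rw [sub_sup, sub_sub_cancel, sub_zero, inf_comm]
    calc μ₁ ⊓ μ₂ = μ₁ - ((μ₁ - μ₂) ⊔ 0) := h2.symm
      _ ≤ μ₁ - t₁₂ := this
      _ ≤ μ₁ + t₂₁ - t₁₂ := by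
          have := add_le_add_right (le_add_of_nonneg_right (a := μ₁) ht0) (-t₁₂)
          simpa [sub_eq_add_neg] using this
  have h1u : μ₁ + t₂₁ - t₁₂ ≤ μ₁ ⊔ μ₂ := by
    have : μ₁ + t₂₁ ≤ μ₁ + ((μ₂ - μ₁) ⊔ 0) := add_le_add_right ht μ₁
    have h2 : μ₁ + ((μ₂ - μ₁) ⊔ 0) = μ₁ ⊔ μ₂ := by
      rw [add_sup, add_sub_cancel, add_zero, sup_comm]
    calc μ₁ + t₂₁ - t₁₂ ≤ μ₁ + t₂₁ := sub_le_self _ hs0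
      _ ≤ μ₁ ⊔ μ₂ := h2 ▸ this
  have h2l : μ₁ ⊓ μ₂ ≤ μ₂ - t₂₁ + t₁₂ := by
    have : μ₂ - ((μ₂ - μ₁) ⊔ 0) ≤ μ₂ - t₂₁ := sub_le_sub_left ht μ₂
    have h2 : μ₂ - ((μ₂ - μ₁) ⊔ 0) = μ₁ ⊓ μ₂ := by
      rw [sub_sup, sub_sub_cancel, sub_zero]
    calc μ₁ ⊓ μ₂ ≤ μ₂ - t₂₁ := h2 ▸ this
      _ ≤ μ₂ - t₂₁ + t₁₂ := le_add_of_nonneg_right hs0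
  have h2u : μ₂ - t₂₁ + t₁₂ ≤ μ₁ ⊔ μ₂ := by
    have : μ₂ + t₁₂ ≤ μ₂ + ((μ₁ - μ₂) ⊔ 0) := add_le_add_right hs μ₂
    have h2 : μ₂ + ((μ₁ - μ₂) ⊔ 0) = μ₁ ⊔ μ₂ := by
      rw [add_sup, add_sub_cancel, add_zero, sup_comm]
    calc μ₂ - t₂₁ + t₁₂ ≤ μ₂ + t₁₂ := by
          have : μ₂ - t₂₁ ≤ μ₂ := sub_le_self _ ht0
          exact add_le_add_left this t₁₂
      _ ≤ μ₁ ⊔ μ₂ := h2 ▸ this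
  have hsum : (μ₁ + t₂₁ - t₁₂) + (μ₂ - t₂₁ + t₁₂) = μ₁ + μ₂ := by abel
  have hHle := hH μ₁ μ₂ _ _ h1l h1u h2l h2u hsum
  calc (F₁ (μ₁ + t₂₁ - t₁₂) + H (μ₁ + t₂₁ - t₁₂)) +
        (F₂ (μ₂ - t₂₁ + t₁₂) + H (μ₂ - t₂₁ + t₁₂))
      = (F₁ (μ₁ + t₂₁ - t₁₂) + F₂ (μ₂ - t₂₁ + t₁₂)) +
        (H (μ₁ + t₂₁ - t₁₂) + H (μ₂ - t₂₁ + t₁₂)) := add_add_add_comm _ _ _ _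
    _ ≤ (F₁ μ₁ + F₂ μ₂) + (H μ₁ + H μ₂) := add_le_add hF hHle
    _ = (F₁ μ₁ + H μ₁) + (F₂ μ₂ + H μ₂) := (add_add_add_comm _ _ _ _).symm
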